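/- There exists a unique function ‽ : [0,1] ∩ ℚ → ℝ satisfying ‽(0) = 0, ‽(x) = 4^{-⌊1/x⌋}(1 - 2‽({1/x})) for 0 < x ≤ 1/2, and ‽(x) = 3/8 - (3/4)‽(1/x - 1) - (1/2)‽(1 - x) for 1/2 < x ≤ 1. -/

import Mathlib

/-- The defining functional equations of the interrobang function on `[0,1] ∩ ℚ`. -/
def InterrobangEq (f : ℚ → ℝ) : Prop :=
  f 0 = 0 ∧
  (∀ x : ℚ, 0 < x → x ≤ 1/2 →
    f x = (4 : ℝ) ^ (-⌊(1/x : ℚ)⌋) * (1 - 2 * f (Int.fract (1/x)))) ∧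
  (∀ x : ℚ, 1/2 < x → x ≤ 1 →
    f x = 3/8 - 3/4 * f (1/x - 1) - 1/2 * f (1 - x))

namespace Itb

def height (q : ℚ) : ℕ := q.num.natAbs + q.den

lemma num_den_add_int (q : ℚ) (n : ℤ) :
    (q + n).num = q.num + n * q.den ∧ (q + n).den = q.den := by
  have hb : (0:ℤ) < (q.den : ℤ) := by exact_mod_cast q.pos
  have hcop : Nat.Coprime (q.num + n * q.den).natAbs ((q.den : ℤ)).natAbs := by
    have h1 : IsCoprime q.num (q.den : ℤ) := by
      rw [Int.isCoprime_iff_gcd_eq_one]; exact q.reduced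
    have h2 : IsCoprime (q.num + (q.den : ℤ) * n) (q.den : ℤ) := h1.add_mul_left_left n
    rw [Int.isCoprime_iff_gcd_eq_one] at h2
    simpa [Int.gcd, mul_comm] using h2
  have key : q + (n : ℚ) = ((q.num + n * q.den : ℤ) : ℚ) / ((q.den : ℤ) : ℚ) := by
    have hden : ((q.den : ℤ) : ℚ) ≠ 0 := by exact_mod_cast hb.ne'
    rw [eq_div_iff hden]
    push_cast
    rw [add_mul, Rat.mul_den_eq_num]
  constructor
  · rw [key]; exact Rat.num_div_eq_of_coprime hb hcop
  · rw [key]; exact_mod_cast Rat.den_div_eq_of_coprime hb hcop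

lemma num_den_inv {q : ℚ} (hq : 0 < q) :
    q⁻¹.num = (q.den : ℤ) ∧ (q⁻¹.den : ℤ) = q.num := by
  have hn : 0 < q.num := Rat.num_pos.mpr hq
  have hcop : Nat.Coprime ((q.den : ℤ)).natAbs q.num.natAbs := by
    simpa using q.reduced.symm
  have key : q⁻¹ = ((q.den : ℤ) : ℚ) / ((q.num : ℤ) : ℚ) := by
    have hnum : ((q.num : ℤ) : ℚ) ≠ 0 := by exact_mod_cast hn.ne'
    rw [eq_div_iff hnum, inv_mul_eq_div, div_eq_iff hq.ne', ← Rat.mul_den_eq_num, mul_comm]; push_cast; ring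
  constructor
  · rw [key]; exact Rat.num_div_eq_of_coprime hn hcop
  · rw [key]; exact Rat.den_div_eq_of_coprime hn hcop

lemma num_lt_den_of_x {x : ℚ} (hx : 0 < x) (hx1 : x ≤ 1) : x.num ≤ (x.den : ℤ) := by
  rcases lt_or_eq_of_le hx1 with h' | h'
  · exact le_of_lt (Rat.lt_one_iff_num_lt_denom.mpr h')
  · simp [h']

-- height of Int.fract q⁻¹ for 0 < x ≤ 1/2
lemma height_fract_inv {x : ℚ} (hx : 0 < x) (hx2 : x ≤ 1/2) :
    height (Int.fract (1/x)) < height x := by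
  have hinv := num_den_inv hx
  have hnum : 0 < x.num := Rat.num_pos.mpr hx
  -- fract q = q + (-⌊q⌋)
  have hfr : Int.fract x⁻¹ = x⁻¹ + ((-⌊x⁻¹⌋ : ℤ) : ℚ) := by
    rw [Int.fract]; push_cast; ring
  have hadd := num_den_add_int x⁻¹ (-⌊x⁻¹⌋)
  have hden : (Int.fract x⁻¹).den = x.num.natAbs := by
    rw [hfr, hadd.2]
    have := hinv.2
    omega
  have hfrac_nonneg : 0 ≤ (Int.fract x⁻¹).num := Rat.num_nonneg.mpr (Int.fract_nonneg _)
  have hfrac_lt : (Int.fract x⁻¹).num < ((Int.fract x⁻¹).den : ℤ) :=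
    Rat.lt_one_iff_num_lt_denom.mpr (Int.fract_lt_one _)
  have hab : x.num < (x.den : ℤ) := by
    have : x < 1 := lt_of_le_of_lt hx2 (by norm_num)
    exact Rat.lt_one_iff_num_lt_denom.mpr this
  have h1 : (Int.fract x⁻¹).num.natAbs < x.den := by
    rw [hden] at hfrac_lt
    omega
  have : height (Int.fract x⁻¹) = (Int.fract x⁻¹).num.natAbs + x.num.natAbs := by
    rw [height, hden]
  rw [one_div, this, height]
  omega

lemma height_inv_sub_one {x : ℚ} (hx : 1/2 < x) (hx1 : x ≤ 1) :
    height (1/x - 1) < height x := by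
  have hx0 : 0 < x := lt_trans (by norm_num) hx
  have hinv := num_den_inv hx0
  have hnum : 0 < x.num := Rat.num_pos.mpr hx0
  have heq : 1/x - 1 = x⁻¹ + ((-1 : ℤ) : ℚ) := by push_cast; rw [one_div]; ring
  have hadd := num_den_add_int x⁻¹ (-1)
  have hle : x.num ≤ (x.den : ℤ) := num_lt_den_of_x hx0 hx1
  have hnum' : (1/x - 1).num = (x.den : ℤ) - x.num := by
    rw [heq, hadd.1, hinv.1]
    have := hinv.2
    omega
  have hden' : (1/x - 1).den = x.num.natAbs := by
    rw [heq, hadd.2]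
    have := hinv.2
    omega
  rw [height, hnum', hden', height]
  omega

lemma height_one_sub {x : ℚ} (hx : 1/2 < x) (hx1 : x ≤ 1) :
    height (1 - x) < height x := by
  have hx0 : 0 < x := lt_trans (by norm_num) hx
  have hnum : 0 < x.num := Rat.num_pos.mpr hx0
  have heq : 1 - x = -(x + ((-1 : ℤ) : ℚ)) := by push_cast; ring
  have hadd := num_den_add_int x (-1)
  have hnum' : (1 - x).num = (x.den : ℤ) - x.num := by
    rw [heq, Rat.num_neg_eq_neg_num, hadd.1]; ring
  have hden' : (1 - x).den = x.den := by
    rw [heq, Rat.den_neg_eq_den, hadd.2]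
  -- from 1/2 < x : den < 2 * num
  have hhalf : (x.den : ℤ) < 2 * x.num := by
    have h2 : (1 : ℚ)/2 < (x.num : ℚ) / (x.den : ℚ) := by rw [Rat.num_div_den]; exact hx
    have hdpos : (0:ℚ) < (x.den : ℚ) := by exact_mod_cast x.pos
    rw [div_lt_div_iff₀ (by norm_num) hdpos] at h2
    have : (x.den : ℚ) < 2 * (x.num : ℚ) := by linarith
    exact_mod_cast this
  rw [height, hnum', hden', height]
  have hle : x.num ≤ (x.den : ℤ) := num_lt_den_of_x hx0 hx1
  omega

noncomputable def f (q : ℚ) : ℝ :=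
  if h1 : 0 < q ∧ q ≤ 1/2 then
    (4 : ℝ) ^ (-⌊(1/q : ℚ)⌋) * (1 - 2 * f (Int.fract (1/q)))
  else if h2 : 1/2 < q ∧ q ≤ 1 then
    3/8 - 3/4 * f (1/q - 1) - 1/2 * f (1 - q)
  else 0
  termination_by height q
  decreasing_by
  · exact height_fract_inv h1.1 h1.2
  · exact height_inv_sub_one h2.1 h2.2
  · exact height_one_sub h2.1 h2.2

lemma f_zero : f 0 = 0 := by
  rw [f]; norm_num

lemma f_low {x : ℚ} (h1 : 0 < x) (h2 : x ≤ 1/2) :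
    f x = (4 : ℝ) ^ (-⌊(1/x : ℚ)⌋) * (1 - 2 * f (Int.fract (1/x))) := by
  rw [f, dif_pos ⟨h1, h2⟩]

lemma f_high {x : ℚ} (h1 : 1/2 < x) (h2 : x ≤ 1) :
    f x = 3/8 - 3/4 * f (1/x - 1) - 1/2 * f (1 - x) := by
  rw [f, dif_neg (by rintro ⟨_, h⟩; exact absurd h1 (not_lt.mpr h)), dif_pos ⟨h1, h2⟩]

end Itb

theorem interrobang_exists_unique :
    ∃ f : ℚ → ℝ, InterrobangEq f ∧
      ∀ g : ℚ → ℝ, InterrobangEq g → ∀ x ∈ Set.Icc (0:ℚ) 1, g x = f x := by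
  refine ⟨Itb.f, ⟨Itb.f_zero, fun x h1 h2 => Itb.f_low h1 h2,
    fun x h1 h2 => Itb.f_high h1 h2⟩, ?_⟩
  rintro g ⟨hg0, hglow, hghigh⟩ x ⟨hx0, hx1⟩
  have key : ∀ n : ℕ, ∀ x : ℚ, Itb.height x ≤ n → 0 ≤ x → x ≤ 1 → g x = Itb.f x := by
    intro n
    induction n with
    | zero =>
      intro x hx _ _
      exact absurd hx (by have := x.pos; unfold Itb.height; omega)
    | succ n ih =>
      intro x hx hx0 hx1
      rcases eq_or_lt_of_le hx0 with h0 | h0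
      · rw [← h0, hg0, Itb.f_zero]
      rcases le_or_gt x (1/2) with hle | hgt
      · rw [hglow x h0 hle, Itb.f_low h0 hle]
        have hh := Itb.height_fract_inv h0 hle
        rw [ih _ (by omega) (Int.fract_nonneg _) (le_of_lt (Int.fract_lt_one _))]
      · rw [hghigh x hgt hx1, Itb.f_high hgt hx1]
        have hh1 := Itb.height_inv_sub_one hgt hx1
        have hh2 := Itb.height_one_sub hgt hx1
        have hx0' : 0 < x := lt_trans (by norm_num) hgt
        have r1 : (0:ℚ) ≤ 1/x - 1 := by
          rw [sub_nonneg, le_div_iff₀ hx0', one_mul]; exact hx1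
        have r2 : 1/x - 1 ≤ 1 := by
          rw [sub_le_iff_le_add, div_le_iff₀ hx0']; linarith
        rw [ih _ (by omega) r1 r2, ih _ (by omega) (by linarith) (by linarith)]
  exact key (Itb.height x) x le_rfl hx0 hx1
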